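/- Let ω be an irrational real number and let α be the map on ℓ²(ℤ²) induced by the quantum torus automorphism, acting on the orthonormal basis {e_{n,m}} (corresponding to monomials UⁿVᵐ) by α(e_{n,m}) = e^{2πi(nω + h·m(m-1)/2)} e_{n+m, m}. Then for every positive integer N, the only vectors fixed by α^N are scalar multiples of e_{0,0}; i.e., the system is totally ergodic. -/

import Mathlib

open Complex

private lemma qt_re_zero (x : ℝ) : (2 * (Real.pi:ℂ) * Complex.I * (x:ℂ)).re = 0 := by
  simp [Complex.mul_re, Complex.mul_im]

private lemma qt_norm_exp (z : ℂ) (hz : z.re = 0) : ‖Complex.exp z‖ = 1 := by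
  rw [Complex.norm_exp, hz, Real.exp_zero]

theorem stmt15 (h ω : ℝ) (hω : Irrational ω)
    (α : lp (fun _ : ℤ × ℤ => ℂ) 2 ≃ₗᵢ[ℂ] lp (fun _ : ℤ × ℤ => ℂ) 2)
    (hα : ∀ n m : ℤ,
      α (lp.single 2 ((n, m) : ℤ × ℤ) 1)
        = Complex.exp (2 * Real.pi * Complex.I * (n * ω + h * m * (m - 1) / 2))
            • lp.single 2 ((n + m, m) : ℤ × ℤ) 1) :
    ∀ N : ℕ, 0 < N → ∀ f : lp (fun _ : ℤ × ℤ => ℂ) 2,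
      (⇑α)^[N] f = f → ∃ c : ℂ, f = c • lp.single 2 ((0, 0) : ℤ × ℤ) 1 := by
  intro N hN f hfix
  -- one-step coefficient formula
  have step : ∀ (g : lp (fun _ : ℤ × ℤ => ℂ) 2) (n m : ℤ),
      (α g) (n + m, m)
        = Complex.exp (2 * Real.pi * Complex.I * (n * ω + h * m * (m - 1) / 2)) * g (n, m) := by
    intro g n m
    have key := α.inner_map_map (lp.single 2 ((n, m) : ℤ × ℤ) 1) g
    rw [hα, lp.inner_single_left, inner_smul_left, lp.inner_single_left] at key
    simp only [RCLike.inner_apply, map_one, one_mul] at key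
    set c := Complex.exp (2 * Real.pi * Complex.I * (↑n * ↑ω + ↑h * ↑m * (↑m - 1) / 2)) with hc
    have hcc : c * (starRingEnd ℂ) c = 1 := by
      rw [Complex.mul_conj]
      norm_cast
      rw [← Complex.sq_norm, Complex.norm_exp]
      norm_num [Complex.mul_re, Complex.mul_im]
    calc (α g) (n + m, m) = c * ((starRingEnd ℂ) c * (α g) (n + m, m)) := by
          rw [← mul_assoc, hcc, one_mul]
      _ = c * g (n, m) := by rw [← mul_one (g (n, m)), ← key, mul_one]
  -- one-step norm equality
  have stepn : ∀ (g : lp (fun _ : ℤ × ℤ => ℂ) 2) (n m : ℤ),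
      ‖(α g) (n + m, m)‖ = ‖g (n, m)‖ := by
    intro g n m
    rw [step, norm_mul]
    have : ((n:ℂ) * ω + h * m * (m - 1) / 2)
        = ((n * ω + h * m * (m - 1) / 2 : ℝ) : ℂ) := by push_cast; ring
    rw [this, qt_norm_exp _ (qt_re_zero _), one_mul]
  -- N-step norm equality
  have iterN : ∀ (k : ℕ) (n m : ℤ), ‖((⇑α)^[k] f) (n + k * m, m)‖ = ‖f (n, m)‖ := by
    intro k
    induction k with
    | zero => intro n m; push_cast; simp
    | succ k ih =>
      intro n m
      rw [Function.iterate_succ_apply']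
      have e1 : n + (k + 1 : ℕ) * m = (n + k * m) + m := by push_cast; ring
      rw [e1, stepn, ih]
  have hNnorm : ∀ n m : ℤ, ‖f (n + N * m, m)‖ = ‖f (n, m)‖ := by
    intro n m
    have := iterN N n m
    rwa [hfix] at this
  -- vanishing for m ≠ 0 via summability
  have hm0 : ∀ n m : ℤ, m ≠ 0 → f (n, m) = 0 := by
    intro n m hm
    have hsum : Summable (fun p : ℤ × ℤ => ‖f p‖ ^ (2 : ENNReal).toReal) :=
      (lp.memℓp f).summable (by norm_num)
    have hconst : ∀ k : ℕ, ‖f (n + k * (N * m), m)‖ = ‖f (n, m)‖ := by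
      intro k
      induction k with
      | zero => simp
      | succ k ih =>
        have e1 : n + ((k : ℤ) + 1) * (N * m) = (n + k * (N * m)) + N * m := by ring
        push_cast
        rw [e1, hNnorm, ih]
    set u : ℕ → ℤ × ℤ := fun k => (n + k * (N * m), m) with hu
    have hinj : Function.Injective u := by
      intro a b hab
      have h1 : (a : ℤ) * (N * m) = b * (N * m) := by
        have := congrArg Prod.fst hab
        simp only [hu] at this
        omega
      have hNm : (N : ℤ) * m ≠ 0 :=
        mul_ne_zero (by exact_mod_cast hN.ne') hm
      exact_mod_cast mul_right_cancel₀ hNm h1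
    have htend : Filter.Tendsto ((fun p : ℤ × ℤ => ‖f p‖ ^ (2 : ENNReal).toReal) ∘ u)
        Filter.atTop (nhds 0) := by
      rw [← Nat.cofinite_eq_atTop]
      exact hsum.tendsto_cofinite_zero.comp hinj.tendsto_cofinite
    have hconst' : ((fun p : ℤ × ℤ => ‖f p‖ ^ (2 : ENNReal).toReal) ∘ u)
        = fun _ => ‖f (n, m)‖ ^ (2 : ENNReal).toReal := by
      funext k
      simp only [Function.comp_apply, hu, hconst k]
    rw [hconst'] at htend
    have h0 : ‖f (n, m)‖ ^ (2 : ENNReal).toReal = 0 :=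
      tendsto_nhds_unique tendsto_const_nhds htend
    have : ‖f (n, m)‖ = 0 := by
      have := (Real.rpow_eq_zero_iff_of_nonneg (norm_nonneg (f (n, m)))).mp h0
      exact this.1
    simpa using this
  -- exact phase for m = 0
  have step0 : ∀ (g : lp (fun _ : ℤ × ℤ => ℂ) 2) (n : ℤ),
      (α g) (n, 0) = Complex.exp (2 * Real.pi * Complex.I * (n * ω)) * g (n, 0) := by
    intro g n
    have := step g n 0
    simp only [add_zero] at this
    rw [this]
    norm_num
  have iter0 : ∀ (k : ℕ) (n : ℤ),
      ((⇑α)^[k] f) (n, 0) = Complex.exp (2 * Real.pi * Complex.I * (n * ω)) ^ k * f (n, 0) := by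
    intro k
    induction k with
    | zero => intro n; simp
    | succ k ih =>
      intro n
      rw [Function.iterate_succ_apply', step0, ih, pow_succ]
      ring
  have hn0 : ∀ n : ℤ, n ≠ 0 → f (n, 0) = 0 := by
    intro n hn
    have key := iter0 N n
    rw [hfix] at key
    by_contra hfne
    have hmul : (Complex.exp (2 * Real.pi * Complex.I * (n * ω)) ^ N - 1) * f (n, 0) = 0 := by
      linear_combination - key
    have hpow : Complex.exp (2 * Real.pi * Complex.I * (n * ω)) ^ N = 1 := by
      rcases mul_eq_zero.mp hmul with h1 | h2
      · exact sub_eq_zero.mp h1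
      · exact absurd h2 hfne
    rw [← Complex.exp_nat_mul, Complex.exp_eq_one_iff] at hpow
    obtain ⟨k, hk⟩ := hpow
    have hπ : (2 * (Real.pi : ℂ) * Complex.I) ≠ 0 :=
      mul_ne_zero (mul_ne_zero two_ne_zero (Complex.ofReal_ne_zero.2 Real.pi_ne_zero))
        Complex.I_ne_zero
    have h2 : (2 * (Real.pi : ℂ) * Complex.I) * ((N : ℂ) * n * ω)
        = (2 * (Real.pi : ℂ) * Complex.I) * k := by linear_combination hk
    have h3 : ((N : ℂ) * n * ω) = (k : ℂ) := mul_left_cancel₀ hπ h2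
    have h4 : ((N : ℝ) * n * ω) = (k : ℝ) := by exact_mod_cast h3
    have hNn : ((N : ℤ) * n) ≠ 0 := mul_ne_zero (by exact_mod_cast hN.ne') hn
    have hirr := Irrational.intCast_mul hω hNn
    exact hirr.ne_int k (by push_cast; linarith)
  -- conclude
  refine ⟨f (0, 0), lp.ext (funext fun p => ?_)⟩
  rcases p with ⟨n, m⟩
  by_cases hm : m = 0
  · subst hm
    by_cases hn : n = 0
    · subst hn
      rw [lp.coeFn_smul, Pi.smul_apply, lp.single_apply_self, smul_eq_mul, mul_one]
    · have hne : ((n, (0:ℤ)) : ℤ × ℤ) ≠ (0, 0) := by simp [hn]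
      rw [hn0 n hn, lp.coeFn_smul, Pi.smul_apply, lp.single_apply_ne 2 _ _ hne, smul_zero]
  · have hne : ((n, m) : ℤ × ℤ) ≠ (0, 0) := by simp [hm]
    rw [hm0 n m hm, lp.coeFn_smul, Pi.smul_apply, lp.single_apply_ne 2 _ _ hne, smul_zero]
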